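/- arXiv:1004.2626 — 7 statements merged into one kernel-verified Lean document; each statement's English description precedes it below -/
import Mathlib

section
/- Simultaneous Hall condition (necessity): Let G be an overlapping bipartite graph with parts A = S ∪ T (S ∩ T ≠ ∅) and B. If there exists a simultaneous matching M ⊆ E (i.e., M ∩ (S × B) is a matching covering S and M ∩ (T × B) is a matching covering T), then for every subset P ⊆ A, |N(P)| + |N(P^S) ∩ N(P^T)| ≥ |P|, where P^S = P ∩ (S \ T), P^T = P ∩ (T \ S). -/
open Finset

variable {V W : Type*} [DecidableEq V] [DecidableEq W]

/-- Neighborhood of a set `P` of left vertices in the bipartite graph with edge set `E`. -/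
def nbhd (E : Finset (V × W)) (P : Finset V) : Finset W :=
  (E.filter (fun e => e.1 ∈ P)).image Prod.snd

/-- A set of pairwise non-adjacent edges. -/
def IsMatching (M : Finset (V × W)) : Prop :=
  ∀ e ∈ M, ∀ f ∈ M, e ≠ f → e.1 ≠ f.1 ∧ e.2 ≠ f.2

/-- Every vertex of `S` is incident to an edge of `M`. -/
def Covers (M : Finset (V × W)) (S : Finset V) : Prop :=
  ∀ s ∈ S, ∃ e ∈ M, e.1 = s

/-- `M` is a simultaneous matching: `M ∩ (S × B)` is a matching covering `S` and
`M ∩ (T × B)` is a matching covering `T`. -/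
def SimMatching (E M : Finset (V × W)) (S T : Finset V) : Prop :=
  M ⊆ E ∧
  IsMatching (M.filter (fun e => e.1 ∈ S)) ∧ Covers (M.filter (fun e => e.1 ∈ S)) S ∧
  IsMatching (M.filter (fun e => e.1 ∈ T)) ∧ Covers (M.filter (fun e => e.1 ∈ T)) T

/-- Necessity of the simultaneous Hall condition. -/
theorem simHall_necessary (B : Finset W) (S T : Finset V) (E M : Finset (V × W))
    (hE : E ⊆ (S ∪ T) ×ˢ B) (hST : (S ∩ T).Nonempty)
    (hM : SimMatching E M S T) :
    ∀ P ⊆ S ∪ T,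
      P.card ≤ (nbhd E P).card +
        (nbhd E (P ∩ (S \ T)) ∩ nbhd E (P ∩ (T \ S))).card := by
  classical
  obtain ⟨hME, hMS, hCS, hMT, hCT⟩ := hM
  obtain ⟨s0, hs0⟩ := hST
  obtain ⟨e0, he0, -⟩ := hCS s0 (mem_inter.1 hs0).1
  set f : V → W := fun v => if h : ∃ w, (v, w) ∈ M then h.choose else e0.2 with hf
  have hf_mem : ∀ v, (∃ e ∈ M, e.1 = v) → (v, f v) ∈ M := by
    intro v hv
    obtain ⟨e, he, hev⟩ := hv
    have h : ∃ w, (v, w) ∈ M := ⟨e.2, by rw [← hev, Prod.mk.eta]; exact he⟩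
    simp only [hf, dif_pos h]
    exact h.choose_spec
  have hfS_mem : ∀ v ∈ S, (v, f v) ∈ M := by
    intro v hv
    obtain ⟨e, he, hev⟩ := hCS v hv
    exact hf_mem v ⟨e, (mem_filter.1 he).1, hev⟩
  have hfT_mem : ∀ v ∈ T, (v, f v) ∈ M := by
    intro v hv
    obtain ⟨e, he, hev⟩ := hCT v hv
    exact hf_mem v ⟨e, (mem_filter.1 he).1, hev⟩
  -- injectivity of f on S and on T
  have key : ∀ U : Finset V, IsMatching (M.filter (fun e => e.1 ∈ U)) →
      (∀ v ∈ U, (v, f v) ∈ M) →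
      ∀ p ∈ U, ∀ q ∈ U, f p = f q → p = q := by
    intro U hU hmem p hp q hq hpq
    by_contra hne
    have h1 : (p, f p) ∈ M.filter (fun e => e.1 ∈ U) :=
      mem_filter.2 ⟨hmem p hp, hp⟩
    have h2 : (q, f q) ∈ M.filter (fun e => e.1 ∈ U) :=
      mem_filter.2 ⟨hmem q hq, hq⟩
    have hne' : ((p, f p) : V × W) ≠ (q, f q) := by
      intro h; exact hne (congrArg Prod.fst h)
    exact (hU _ h1 _ h2 hne').2 hpq
  intro P hP
  set P1 := P ∩ S with hP1
  set P2 := P ∩ (T \ S) with hP2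
  have hPsplit : P = P1 ∪ P2 := by
    ext v
    simp only [hP1, hP2, mem_union, mem_inter, mem_sdiff]
    constructor
    · intro hv
      rcases mem_union.1 (hP hv) with h | h
      · exact Or.inl ⟨hv, h⟩
      · by_cases hvS : v ∈ S
        · exact Or.inl ⟨hv, hvS⟩
        · exact Or.inr ⟨hv, h, hvS⟩
    · rintro (⟨h, _⟩ | ⟨h, _⟩) <;> exact h
  have hdisj : Disjoint P1 P2 := by
    simp only [disjoint_left, hP1, hP2, mem_inter, mem_sdiff]
    rintro a ⟨-, ha⟩ ⟨-, -, h⟩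
    exact h ha
  set A1 := P1.image f with hA1
  set A2 := P2.image f with hA2
  have hcard1 : A1.card = P1.card := by
    apply card_image_of_injOn
    intro p hp q hq hpq
    exact key S hMS hfS_mem p (mem_inter.1 hp).2 q (mem_inter.1 hq).2 hpq
  have hcard2 : A2.card = P2.card := by
    apply card_image_of_injOn
    intro p hp q hq hpq
    exact key T hMT hfT_mem p (mem_sdiff.1 (mem_inter.1 hp).2).1 q
      (mem_sdiff.1 (mem_inter.1 hq).2).1 hpq
  have hsub : A1 ∪ A2 ⊆ nbhd E P := by
    intro w hw
    rcases mem_union.1 hw with hw | hw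
    · obtain ⟨p, hp, hpw⟩ := mem_image.1 hw
      exact mem_image.2 ⟨(p, w), mem_filter.2 ⟨hME (hpw ▸ hfS_mem p (mem_inter.1 hp).2),
        (mem_inter.1 hp).1⟩, rfl⟩
    · obtain ⟨p, hp, hpw⟩ := mem_image.1 hw
      exact mem_image.2 ⟨(p, w), mem_filter.2 ⟨hME (hpw ▸ hfT_mem p
        (mem_sdiff.1 (mem_inter.1 hp).2).1), (mem_inter.1 hp).1⟩, rfl⟩
  have hsub2 : A1 ∩ A2 ⊆ nbhd E (P ∩ (S \ T)) ∩ nbhd E (P ∩ (T \ S)) := by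
    intro w hw
    obtain ⟨hw1, hw2⟩ := mem_inter.1 hw
    obtain ⟨p, hp, hpw⟩ := mem_image.1 hw1
    obtain ⟨q, hq, hqw⟩ := mem_image.1 hw2
    obtain ⟨hpP, hpS⟩ := mem_inter.1 hp
    obtain ⟨hqP, hqTS⟩ := mem_inter.1 hq
    obtain ⟨hqT, hqS⟩ := mem_sdiff.1 hqTS
    -- p ∉ T
    have hpT : p ∉ T := by
      intro hpT
      have := key T hMT hfT_mem p hpT q hqT (hpw.trans hqw.symm)
      exact hqS (this ▸ hpS)
    refine mem_inter.2 ⟨?_, ?_⟩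
    · exact mem_image.2 ⟨(p, w), mem_filter.2 ⟨hME (hpw ▸ hfS_mem p hpS),
        mem_inter.2 ⟨hpP, mem_sdiff.2 ⟨hpS, hpT⟩⟩⟩, rfl⟩
    · exact mem_image.2 ⟨(q, w), mem_filter.2 ⟨hME (hqw ▸ hfT_mem q hqT),
        mem_inter.2 ⟨hqP, hqTS⟩⟩, rfl⟩
  calc P.card = P1.card + P2.card := by
        rw [hPsplit, card_union_of_disjoint hdisj]
    _ = A1.card + A2.card := by rw [hcard1, hcard2]
    _ = (A1 ∪ A2).card + (A1 ∩ A2).card := (card_union_add_card_inter A1 A2).symm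
    _ ≤ (nbhd E P).card + (nbhd E (P ∩ (S \ T)) ∩ nbhd E (P ∩ (T \ S))).card :=
        Nat.add_le_add (card_le_card hsub) (card_le_card hsub2)
end

section
/- Edge choice preserves sim-HC under strict inequality: Let G be an overlapping bipartite graph satisfying the strict simultaneous Hall condition |N(P)| + |N(P^S) ∩ N(P^T)| > |P| for all nonempty proper subsets P ⊂ A. Let u ∈ S \ T, (u,v) ∈ E, and let G' be the graph obtained by deleting u from A and deleting every edge (u',v) with u' ∈ S. Then G' satisfies the simultaneous Hall condition |N'(P)| + |N'(P^S) ∩ N'(P^T)| ≥ |P| for all P ⊆ A \ {u}. -/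
open Finset

variable {V W : Type*} [DecidableEq V] [DecidableEq W]

lemma mem_nbhd {E : Finset (V × W)} {P : Finset V} {w : W} :
    w ∈ nbhd E P ↔ ∃ p ∈ P, (p, w) ∈ E := by
  simp only [nbhd, Finset.mem_image, Finset.mem_filter]
  constructor
  · rintro ⟨⟨a, b⟩, ⟨hE, hP⟩, rfl⟩; exact ⟨a, hP, hE⟩
  · rintro ⟨p, hp, hE⟩; exact ⟨(p, w), ⟨hE, hp⟩, rfl⟩

lemma nbhd_mono {E : Finset (V × W)} {P Q : Finset V} (h : P ⊆ Q) :
    nbhd E P ⊆ nbhd E Q := by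
  intro w hw
  rw [mem_nbhd] at hw ⊢
  obtain ⟨p, hp, he⟩ := hw
  exact ⟨p, h hp, he⟩

/-- Choosing an edge `(u,v)` with `u ∈ S \ T` preserves the simultaneous Hall condition
when the strict simultaneous Hall condition holds on all nonempty proper subsets. -/
theorem simHall_strict_edge_choice (B : Finset W) (S T : Finset V) (E : Finset (V × W))
    (hE : E ⊆ (S ∪ T) ×ˢ B) (hST : (S ∩ T).Nonempty)
    (u : V) (v : W) (hu : u ∈ S \ T) (huv : (u, v) ∈ E)
    (hstrict : ∀ P ⊆ S ∪ T, P.Nonempty → P ⊂ S ∪ T →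
      P.card < (nbhd E P).card +
        (nbhd E (P ∩ (S \ T)) ∩ nbhd E (P ∩ (T \ S))).card) :
    ∀ P ⊆ (S ∪ T).erase u,
      P.card ≤ (nbhd (E.filter (fun e => e.1 ≠ u ∧ ¬(e.1 ∈ S ∧ e.2 = v))) P).card +
        (nbhd (E.filter (fun e => e.1 ≠ u ∧ ¬(e.1 ∈ S ∧ e.2 = v))) (P ∩ (S \ T)) ∩
         nbhd (E.filter (fun e => e.1 ≠ u ∧ ¬(e.1 ∈ S ∧ e.2 = v))) (P ∩ (T \ S))).card := by
  intro P hP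
  set E' := E.filter (fun e : V × W => e.1 ≠ u ∧ ¬(e.1 ∈ S ∧ e.2 = v)) with hE'def
  rcases P.eq_empty_or_nonempty with rfl | hPne
  · simp
  have huP : u ∉ P := fun h => (Finset.mem_erase.mp (hP h)).1 rfl
  have hPsub : P ⊆ S ∪ T := hP.trans (Finset.erase_subset _ _)
  have huST : u ∈ S ∪ T := Finset.mem_union_left _ (Finset.mem_sdiff.mp hu).1
  have hss : P ⊂ S ∪ T := ⟨hPsub, fun h => huP (h huST)⟩
  have hlt := hstrict P hPsub hPne hss
  -- basic facts
  have hsub' : ∀ Q : Finset V, Q ⊆ P → (nbhd E Q).erase v ⊆ nbhd E' Q := by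
    intro Q hQ w hw
    obtain ⟨hwv, hw⟩ := Finset.mem_erase.mp hw
    rw [mem_nbhd] at hw ⊢
    obtain ⟨p, hp, he⟩ := hw
    refine ⟨p, hp, Finset.mem_filter.mpr ⟨he, ?_, ?_⟩⟩
    · exact fun h => huP (h ▸ hQ hp)
    · rintro ⟨-, h⟩; exact hwv h
  have hT' : nbhd E (P ∩ (T \ S)) ⊆ nbhd E' (P ∩ (T \ S)) := by
    intro w hw
    rw [mem_nbhd] at hw ⊢
    obtain ⟨p, hp, he⟩ := hw
    have hpS : p ∉ S := (Finset.mem_sdiff.mp (Finset.mem_inter.mp hp).2).2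
    refine ⟨p, hp, Finset.mem_filter.mpr ⟨he, ?_, ?_⟩⟩
    · exact fun h => huP (h ▸ (Finset.mem_inter.mp hp).1)
    · rintro ⟨h, -⟩; exact hpS h
  have hfilter_sub : ∀ Q : Finset V, nbhd E' Q ⊆ nbhd E Q := by
    intro Q w hw
    rw [mem_nbhd] at hw ⊢
    obtain ⟨p, hp, he⟩ := hw
    exact ⟨p, hp, (Finset.mem_filter.mp he).1⟩
  by_cases hv : v ∈ nbhd E (P ∩ (T \ S))
  · -- v survives in N'(P) via an edge from P ∩ (T \ S)
    have hNP : nbhd E P ⊆ nbhd E' P := by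
      intro w hw
      by_cases hwv : w = v
      · subst hwv
        exact nbhd_mono Finset.inter_subset_left (hT' hv)
      · exact hsub' P (subset_refl _) (Finset.mem_erase.mpr ⟨hwv, hw⟩)
    have hInt : nbhd E (P ∩ (S \ T)) ∩ nbhd E (P ∩ (T \ S)) ⊆
        insert v (nbhd E' (P ∩ (S \ T)) ∩ nbhd E' (P ∩ (T \ S))) := by
      intro w hw
      obtain ⟨h1, h2⟩ := Finset.mem_inter.mp hw
      by_cases hwv : w = v
      · exact Finset.mem_insert.mpr (Or.inl hwv)
      · refine Finset.mem_insert.mpr (Or.inr (Finset.mem_inter.mpr ⟨?_, hT' h2⟩))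
        exact hsub' _ Finset.inter_subset_left (Finset.mem_erase.mpr ⟨hwv, h1⟩)
    have c1 : (nbhd E P).card ≤ (nbhd E' P).card := Finset.card_le_card hNP
    have c2 : (nbhd E (P ∩ (S \ T)) ∩ nbhd E (P ∩ (T \ S))).card ≤
        (nbhd E' (P ∩ (S \ T)) ∩ nbhd E' (P ∩ (T \ S))).card + 1 := by
      calc _ ≤ (insert v (nbhd E' (P ∩ (S \ T)) ∩ nbhd E' (P ∩ (T \ S)))).card :=
              Finset.card_le_card hInt
        _ ≤ _ := Finset.card_insert_le _ _
    omega
  · -- v not in N(P ∩ (T \ S)), so intersection is preserved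
    have hNP : nbhd E P ⊆ insert v (nbhd E' P) := by
      intro w hw
      by_cases hwv : w = v
      · exact Finset.mem_insert.mpr (Or.inl hwv)
      · exact Finset.mem_insert.mpr (Or.inr
          (hsub' P (subset_refl _) (Finset.mem_erase.mpr ⟨hwv, hw⟩)))
    have hInt : nbhd E (P ∩ (S \ T)) ∩ nbhd E (P ∩ (T \ S)) ⊆
        nbhd E' (P ∩ (S \ T)) ∩ nbhd E' (P ∩ (T \ S)) := by
      intro w hw
      obtain ⟨h1, h2⟩ := Finset.mem_inter.mp hw
      have hwv : w ≠ v := fun h => hv (h ▸ h2)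
      exact Finset.mem_inter.mpr
        ⟨hsub' _ Finset.inter_subset_left (Finset.mem_erase.mpr ⟨hwv, h1⟩), hT' h2⟩
    have c1 : (nbhd E P).card ≤ (nbhd E' P).card + 1 := by
      calc _ ≤ (insert v (nbhd E' P)).card := Finset.card_le_card hNP
        _ ≤ _ := Finset.card_insert_le _ _
    have c2 : (nbhd E (P ∩ (S \ T)) ∩ nbhd E (P ∩ (T \ S))).card ≤
        (nbhd E' (P ∩ (S \ T)) ∩ nbhd E' (P ∩ (T \ S))).card :=
      Finset.card_le_card hInt
    omega
end

section
/- Extending a simultaneous matching by an edge (one-sided case): Let G be an overlapping bipartite graph with A = S ∪ T, let (u,v) ∈ E with u ∈ S \ T, and let G' be obtained from G by deleting vertex u and all edges (u', v) with u' ∈ S. If M' is a simultaneous matching in G', then M' ∪ {(u,v)} is a simultaneous matching in G. -/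
open Finset

variable {V W : Type*} [DecidableEq V] [DecidableEq W]

/-- Extending a simultaneous matching by an edge `(u,v)` with `u ∈ S \ T`:
delete `u` and all edges `(u',v)` with `u' ∈ S`. -/
theorem simMatching_extend_one_sided (B : Finset W) (S T : Finset V) (E : Finset (V × W))
    (hE : E ⊆ (S ∪ T) ×ˢ B) (hST : (S ∩ T).Nonempty)
    (u : V) (v : W) (hu : u ∈ S \ T) (huv : (u, v) ∈ E)
    (M' : Finset (V × W))
    (hM' : SimMatching (E.filter (fun e => e.1 ≠ u ∧ ¬(e.1 ∈ S ∧ e.2 = v))) M'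
            (S.erase u) T) :
    SimMatching E (insert (u, v) M') S T := by
  obtain ⟨hsub, hmS, hcS, hmT, hcT⟩ := hM'
  have huS : u ∈ S := (Finset.mem_sdiff.mp hu).1
  have huT : u ∉ T := (Finset.mem_sdiff.mp hu).2
  -- every edge of M' has first coord ≠ u, and if first coord ∈ S then snd ≠ v
  have hkey : ∀ e ∈ M', e.1 ≠ u ∧ ¬(e.1 ∈ S ∧ e.2 = v) := by
    intro e he
    exact (Finset.mem_filter.mp (hsub he)).2
  have hsubE : insert (u, v) M' ⊆ E := by
    intro e he
    rcases Finset.mem_insert.mp he with h | h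
    · exact h ▸ huv
    · exact Finset.mem_filter.mp (hsub h) |>.1
  -- S filter of M' equals (S.erase u) filter
  have hfiltS : M'.filter (fun e => e.1 ∈ S) = M'.filter (fun e => e.1 ∈ S.erase u) := by
    apply Finset.filter_congr
    intro e he
    simp only [Finset.mem_erase, eq_iff_iff]
    exact ⟨fun h => ⟨(hkey e he).1, h⟩, fun h => h.2⟩
  have hinsS : (insert (u, v) M').filter (fun e => e.1 ∈ S)
      = insert (u, v) (M'.filter (fun e => e.1 ∈ S)) := by
    rw [Finset.filter_insert]
    simp [huS]
  have hinsT : (insert (u, v) M').filter (fun e => e.1 ∈ T)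
      = M'.filter (fun e => e.1 ∈ T) := by
    rw [Finset.filter_insert]
    simp [huT]
  refine ⟨hsubE, ?_, ?_, ?_, ?_⟩
  · -- matching on S
    rw [hinsS]
    intro e he f hf hef
    rcases Finset.mem_insert.mp he with he' | he' <;>
      rcases Finset.mem_insert.mp hf with hf' | hf'
    · exact absurd (he'.trans hf'.symm) hef
    · subst he'
      obtain ⟨hfM, hfS⟩ := Finset.mem_filter.mp hf'
      have := hkey f hfM
      exact ⟨fun h => this.1 h.symm, fun h => this.2 ⟨hfS, h.symm⟩⟩
    · subst hf'
      obtain ⟨heM, heS⟩ := Finset.mem_filter.mp he'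
      have := hkey e heM
      exact ⟨this.1, fun h => this.2 ⟨heS, h⟩⟩
    · rw [hfiltS] at he' hf'
      exact hmS e he' f hf' hef
  · -- covers S
    rw [hinsS]
    intro s hs
    by_cases hsu : s = u
    · exact ⟨(u, v), Finset.mem_insert_self _ _, hsu.symm⟩
    · obtain ⟨e, heM, he1⟩ := hcS s (Finset.mem_erase.mpr ⟨hsu, hs⟩)
      exact ⟨e, Finset.mem_insert_of_mem (hfiltS ▸ heM), he1⟩
  · rw [hinsT]; exact hmT
  · rw [hinsT]; exact hcT
end

section
/- Violation of Rule 2a (value in shared neighborhood of a simultaneous Hall set): Let P ⊆ A be a simultaneous Hall set, i.e., |N(P)| + |N(P^S) ∩ N(P^T)| = |P|. Then no edge (u,v) with u ∉ P and v ∈ N(P^S) ∩ N(P^T) can belong to a simultaneous matching of G. -/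
open Finset

variable {V W : Type*} [DecidableEq V] [DecidableEq W]

/-- Rule 2a: if `P` is a simultaneous Hall set, no edge `(u,v)` with `u ∉ P` and
`v ∈ N(P^S) ∩ N(P^T)` can belong to a simultaneous matching. -/
theorem rule2a_sound (B : Finset W) (S T : Finset V) (E : Finset (V × W))
    (hE : E ⊆ (S ∪ T) ×ˢ B) (hST : (S ∩ T).Nonempty)
    (P : Finset V) (hP : P ⊆ S ∪ T)
    (hHall : (nbhd E P).card +
      (nbhd E (P ∩ (S \ T)) ∩ nbhd E (P ∩ (T \ S))).card = P.card)
    (u : V) (v : W) (huv : (u, v) ∈ E) (hu : u ∉ P)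
    (hv : v ∈ nbhd E (P ∩ (S \ T)) ∩ nbhd E (P ∩ (T \ S))) :
    ∀ M, SimMatching E M S T → (u, v) ∉ M := by
  intro M hM hmem
  obtain ⟨hME, hMS, hCS, hMT, hCT⟩ := hM
  -- membership lemma for nbhd
  have mem_nbhd : ∀ (Q : Finset V) (w : W),
      w ∈ nbhd E Q ↔ ∃ e ∈ E, e.1 ∈ Q ∧ e.2 = w := by
    intro Q w
    simp [nbhd, Finset.mem_image, Finset.mem_filter, and_assoc]
  -- conflict lemmas from matchings
  have confS : ∀ e ∈ M, ∀ f ∈ M, e ≠ f → e.1 ∈ S → f.1 ∈ S → e.1 ≠ f.1 ∧ e.2 ≠ f.2 := by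
    intro e he f hf hne heS hfS
    exact hMS e (mem_filter.2 ⟨he, heS⟩) f (mem_filter.2 ⟨hf, hfS⟩) hne
  have confT : ∀ e ∈ M, ∀ f ∈ M, e ≠ f → e.1 ∈ T → f.1 ∈ T → e.1 ≠ f.1 ∧ e.2 ≠ f.2 := by
    intro e he f hf hne heT hfT
    exact hMT e (mem_filter.2 ⟨he, heT⟩) f (mem_filter.2 ⟨hf, hfT⟩) hne
  -- every vertex of M is in S ∪ T
  have hfstST : ∀ e ∈ M, e.1 ∈ S ∪ T := fun e he => (mem_product.1 (hE (hME he))).1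
  -- uniqueness of the M-edge at each left vertex
  have uniq : ∀ e ∈ M, ∀ f ∈ M, e.1 = f.1 → e = f := by
    intro e he f hf hef
    by_contra hne
    rcases mem_union.1 (hfstST e he) with hS | hT
    · exact (confS e he f hf hne hS (hef ▸ hS)).1 hef
    · exact (confT e he f hf hne hT (hef ▸ hT)).1 hef
  set MP := M.filter (fun e => e.1 ∈ P) with hMPdef
  have hMPmem : ∀ e, e ∈ MP ↔ e ∈ M ∧ e.1 ∈ P := fun e => mem_filter
  -- MP covers P
  have hcov : ∀ p ∈ P, ∃ e ∈ MP, e.1 = p := by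
    intro p hp
    rcases mem_union.1 (hP hp) with hS | hT
    · obtain ⟨e, he, hep⟩ := hCS p hS
      exact ⟨e, (hMPmem e).2 ⟨(mem_filter.1 he).1, hep ▸ hp⟩, hep⟩
    · obtain ⟨e, he, hep⟩ := hCT p hT
      exact ⟨e, (hMPmem e).2 ⟨(mem_filter.1 he).1, hep ▸ hp⟩, hep⟩
  -- |MP| = |P|
  have himg : MP.image Prod.fst = P := by
    ext p
    constructor
    · intro hp
      obtain ⟨e, he, hep⟩ := mem_image.1 hp
      exact hep ▸ ((hMPmem e).1 he).2
    · intro hp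
      obtain ⟨e, he, hep⟩ := hcov p hp
      exact mem_image.2 ⟨e, he, hep⟩
  have hcardMP : MP.card = P.card := by
    rw [← himg]
    exact (Finset.card_image_of_injOn (fun e he f hf hef =>
      uniq e ((hMPmem e).1 he).1 f ((hMPmem f).1 hf).1 hef)).symm
  -- fibers
  set fib := fun w : W => MP.filter (fun e => e.2 = w) with hfibdef
  have hfibmem : ∀ w e, e ∈ fib w ↔ e ∈ MP ∧ e.2 = w := fun w e => mem_filter
  -- pairwise: two distinct edges in a fiber are not both in S nor both in T
  have nb : ∀ w, ∀ e ∈ fib w, ∀ f ∈ fib w, e ≠ f →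
      ¬(e.1 ∈ S ∧ f.1 ∈ S) ∧ ¬(e.1 ∈ T ∧ f.1 ∈ T) := by
    intro w e he f hf hne
    obtain ⟨heMP, hew⟩ := (hfibmem w e).1 he
    obtain ⟨hfMP, hfw⟩ := (hfibmem w f).1 hf
    have heM := ((hMPmem e).1 heMP).1
    have hfM := ((hMPmem f).1 hfMP).1
    constructor
    · rintro ⟨h1, h2⟩
      exact (confS e heM f hfM hne h1 h2).2 (hew.trans hfw.symm)
    · rintro ⟨h1, h2⟩
      exact (confT e heM f hfM hne h1 h2).2 (hew.trans hfw.symm)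
  -- fibers have size ≤ 2
  have hfib2 : ∀ w, (fib w).card ≤ 2 := by
    intro w
    by_contra h
    push_neg at h
    obtain ⟨a, b, c, ha, hb, hc, hab, hac, hbc⟩ := Finset.two_lt_card_iff.1 h
    have haST := hfstST a ((hMPmem a).1 ((hfibmem w a).1 ha).1).1
    have hbST := hfstST b ((hMPmem b).1 ((hfibmem w b).1 hb).1).1
    have hcST := hfstST c ((hMPmem c).1 ((hfibmem w c).1 hc).1).1
    have h1 := nb w a ha b hb hab
    have h2 := nb w a ha c hc hac
    have h3 := nb w b hb c hc hbc
    rw [mem_union] at haST hbST hcST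
    rcases haST with hA | hA <;> rcases hbST with hB | hB <;> rcases hcST with hC | hC <;>
      first
        | exact h1.1 ⟨hA, hB⟩
        | exact h1.2 ⟨hA, hB⟩
        | exact h2.1 ⟨hA, hC⟩
        | exact h2.2 ⟨hA, hC⟩
        | exact h3.1 ⟨hB, hC⟩
        | exact h3.2 ⟨hB, hC⟩
  -- fibers of size ≥ 2 give shared neighborhood elements
  set X := nbhd E (P ∩ (S \ T)) ∩ nbhd E (P ∩ (T \ S)) with hXdef
  have htwo : ∀ w, 2 ≤ (fib w).card → w ∈ X := by
    intro w hw
    obtain ⟨e, f, he, hf, hne⟩ := Finset.one_lt_card_iff.1 hw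
    obtain ⟨heMP, hew⟩ := (hfibmem w e).1 he
    obtain ⟨hfMP, hfw⟩ := (hfibmem w f).1 hf
    obtain ⟨heM, heP⟩ := (hMPmem e).1 heMP
    obtain ⟨hfM, hfP⟩ := (hMPmem f).1 hfMP
    have heST := mem_union.1 (hfstST e heM)
    have hfST := mem_union.1 (hfstST f hfM)
    obtain ⟨hnS, hnT⟩ := nb w e he f hf hne
    have key : (e.1 ∈ S \ T ∧ f.1 ∈ T \ S) ∨ (e.1 ∈ T \ S ∧ f.1 ∈ S \ T) := by
      rw [mem_sdiff, mem_sdiff, mem_sdiff, mem_sdiff]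
      tauto
    have win : ∀ (a b : V × W), a ∈ M → b ∈ M → a.1 ∈ P → b.1 ∈ P → a.2 = w → b.2 = w →
        a.1 ∈ S \ T → b.1 ∈ T \ S → w ∈ X := by
      intro a b haM hbM haP hbP haw hbw haS hbT
      rw [hXdef, mem_inter]
      constructor
      · exact (mem_nbhd _ w).2 ⟨a, hME haM, mem_inter.2 ⟨haP, haS⟩, haw⟩
      · exact (mem_nbhd _ w).2 ⟨b, hME hbM, mem_inter.2 ⟨hbP, hbT⟩, hbw⟩
    rcases key with ⟨h1, h2⟩ | ⟨h1, h2⟩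
    · exact win e f heM hfM heP hfP hew hfw h1 h2
    · exact win f e hfM heM hfP heP hfw hew h2 h1
  -- counting
  set I := MP.image Prod.snd with hIdef
  set D := I.filter (fun w => 2 ≤ (fib w).card) with hDdef
  have hsum : MP.card = ∑ w ∈ I, (fib w).card :=
    Finset.card_eq_sum_card_fiberwise (fun e he => mem_image_of_mem _ he)
  have hbound : MP.card ≤ I.card + D.card := by
    rw [hsum]
    calc ∑ w ∈ I, (fib w).card
        ≤ ∑ w ∈ I, (1 + if 2 ≤ (fib w).card then 1 else 0) := by
          apply Finset.sum_le_sum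
          intro w _
          have := hfib2 w
          split <;> omega
      _ = I.card + D.card := by
          rw [Finset.sum_add_distrib, Finset.sum_const, smul_eq_mul, mul_one, hDdef,
            Finset.card_filter]
  have hIsub : I ⊆ nbhd E P := by
    intro w hw
    obtain ⟨e, he, hew⟩ := mem_image.1 hw
    obtain ⟨heM, heP⟩ := (hMPmem e).1 he
    exact (mem_nbhd P w).2 ⟨e, hME heM, heP, hew⟩
  have hDsub : D ⊆ X := fun w hw => htwo w (mem_filter.1 hw).2
  have hDX : D = X := by
    apply Finset.eq_of_subset_of_card_le hDsub
    have h1 : I.card ≤ (nbhd E P).card := Finset.card_le_card hIsub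
    have h2 : D.card ≤ X.card := Finset.card_le_card hDsub
    omega
  -- v ∈ D, so the fiber of v has two edges
  have hvD : v ∈ D := hDX ▸ hv
  have hvfib : 2 ≤ (fib v).card := (mem_filter.1 hvD).2
  obtain ⟨e, f, he, hf, hne⟩ := Finset.one_lt_card_iff.1 hvfib
  obtain ⟨heMP, hev⟩ := (hfibmem v e).1 he
  obtain ⟨hfMP, hfv⟩ := (hfibmem v f).1 hf
  obtain ⟨heM, heP⟩ := (hMPmem e).1 heMP
  obtain ⟨hfM, hfP⟩ := (hMPmem f).1 hfMP
  obtain ⟨hnS, hnT⟩ := nb v e he f hf hne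
  have heST := mem_union.1 (hfstST e heM)
  have hfST := mem_union.1 (hfstST f hfM)
  have hune : ∀ g : V × W, g.1 ∈ P → (u, v) ≠ g := by
    intro g hgP h
    rw [← h] at hgP
    exact hu hgP
  have huST := mem_union.1 (hfstST (u, v) hmem)
  -- derive contradiction
  rcases huST with huS | huT
  · -- one of e.1, f.1 is in S
    have : e.1 ∈ S ∨ f.1 ∈ S := by tauto
    rcases this with hS | hS
    · exact (confS (u, v) hmem e heM (hune e heP) huS hS).2 (by simp [hev])
    · exact (confS (u, v) hmem f hfM (hune f hfP) huS hS).2 (by simp [hfv])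
  · have : e.1 ∈ T ∨ f.1 ∈ T := by tauto
    rcases this with hT | hT
    · exact (confT (u, v) hmem e heM (hune e heP) huT hT).2 (by simp [hev])
    · exact (confT (u, v) hmem f hfM (hune f hfP) huT hT).2 (by simp [hfv])
end

section
/- Violation of Rule 2d (variable in both sets taking a value of a simultaneous Hall set): Let P ⊆ A be a simultaneous Hall set. Then no edge (u,v) with u ∈ (S ∩ T) \ P and v ∈ N(P) can belong to a simultaneous matching of G. -/
open Finset

variable {V W : Type*} [DecidableEq V] [DecidableEq W]

/-- Rule 2d: if `P` is a simultaneous Hall set, no edge `(u,v)` with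
`u ∈ (S ∩ T) \ P` and `v ∈ N(P)` can belong to a simultaneous matching. -/
theorem rule2d_sound (B : Finset W) (S T : Finset V) (E : Finset (V × W))
    (hE : E ⊆ (S ∪ T) ×ˢ B) (hST : (S ∩ T).Nonempty)
    (P : Finset V) (hP : P ⊆ S ∪ T)
    (hHall : (nbhd E P).card +
      (nbhd E (P ∩ (S \ T)) ∩ nbhd E (P ∩ (T \ S))).card = P.card)
    (u : V) (v : W) (huv : (u, v) ∈ E)
    (hu : u ∈ (S ∩ T) \ P) (hv : v ∈ nbhd E P) :
    ∀ M, SimMatching E M S T → (u, v) ∉ M := by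
  intro M hM huvM
  obtain ⟨hME, hMS, hCS, hMT, hCT⟩ := hM
  rw [mem_sdiff, mem_inter] at hu
  obtain ⟨⟨huS, huT⟩, huP⟩ := hu
  set MS := M.filter (fun e => e.1 ∈ S) with hMSdef
  set MT := M.filter (fun e => e.1 ∈ T) with hMTdef
  set FS := MS.filter (fun e => e.1 ∈ P) with hFSdef
  set FT := MT.filter (fun e => e.1 ∈ P) with hFTdef
  have hFSsub : FS ⊆ MS := filter_subset _ _
  have hFTsub : FT ⊆ MT := filter_subset _ _
  -- injectivity of coordinates on FS, FT
  have injfstS : Set.InjOn Prod.fst (FS : Set (V × W)) := by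
    intro e he f hf h
    by_contra hne
    exact (hMS e (hFSsub he) f (hFSsub hf) hne).1 h
  have injsndS : Set.InjOn Prod.snd (FS : Set (V × W)) := by
    intro e he f hf h
    by_contra hne
    exact (hMS e (hFSsub he) f (hFSsub hf) hne).2 h
  have injfstT : Set.InjOn Prod.fst (FT : Set (V × W)) := by
    intro e he f hf h
    by_contra hne
    exact (hMT e (hFTsub he) f (hFTsub hf) hne).1 h
  have injsndT : Set.InjOn Prod.snd (FT : Set (V × W)) := by
    intro e he f hf h
    by_contra hne
    exact (hMT e (hFTsub he) f (hFTsub hf) hne).2 h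
  have hFSfst : FS.image Prod.fst = P ∩ S := by
    ext x
    simp only [hFSdef, hMSdef, mem_image, mem_filter, mem_inter]
    constructor
    · rintro ⟨e, ⟨⟨heM, heS⟩, heP⟩, rfl⟩; exact ⟨heP, heS⟩
    · rintro ⟨hxP, hxS⟩
      obtain ⟨e, heMS, hefst⟩ := hCS x hxS
      rw [mem_filter] at heMS
      exact ⟨e, ⟨heMS, hefst ▸ hxP⟩, hefst⟩
  have hFTfst : FT.image Prod.fst = P ∩ T := by
    ext x
    simp only [hFTdef, hMTdef, mem_image, mem_filter, mem_inter]
    constructor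
    · rintro ⟨e, ⟨⟨heM, heT⟩, heP⟩, rfl⟩; exact ⟨heP, heT⟩
    · rintro ⟨hxP, hxT⟩
      obtain ⟨e, heMT, hefst⟩ := hCT x hxT
      rw [mem_filter] at heMT
      exact ⟨e, ⟨heMT, hefst ▸ hxP⟩, hefst⟩
  set US := FS.image Prod.snd with hUSdef
  set UT := FT.image Prod.snd with hUTdef
  have cardUS : US.card = (P ∩ S).card := by
    rw [hUSdef, card_image_of_injOn injsndS, ← hFSfst, card_image_of_injOn injfstS]
  have cardUT : UT.card = (P ∩ T).card := by
    rw [hUTdef, card_image_of_injOn injsndT, ← hFTfst, card_image_of_injOn injfstT]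
  -- membership of edges of FS, FT in E with fst in P
  have hFS_E : ∀ e ∈ FS, e ∈ E ∧ e.1 ∈ P ∧ e.1 ∈ S := by
    intro e he
    simp only [hFSdef, hMSdef, mem_filter] at he
    exact ⟨hME he.1.1, he.2, he.1.2⟩
  have hFT_E : ∀ e ∈ FT, e ∈ E ∧ e.1 ∈ P ∧ e.1 ∈ T := by
    intro e he
    simp only [hFTdef, hMTdef, mem_filter] at he
    exact ⟨hME he.1.1, he.2, he.1.2⟩
  -- key 1 : intersection bound
  have key1 : US ∩ UT ⊆ ((FS ∩ FT).image Prod.snd) ∪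
      (nbhd E (P ∩ (S \ T)) ∩ nbhd E (P ∩ (T \ S))) := by
    intro b hb
    rw [mem_inter] at hb
    obtain ⟨hbS, hbT⟩ := hb
    obtain ⟨e, heFS, he2⟩ := mem_image.1 hbS
    obtain ⟨f, hfFT, hf2⟩ := mem_image.1 hbT
    by_cases hef : e = f
    · exact mem_union_left _ (mem_image.2 ⟨e, mem_inter.2 ⟨heFS, hef ▸ hfFT⟩, he2⟩)
    · -- e ≠ f : e.1 ∈ S \ T, f.1 ∈ T \ S
      have heM : e ∈ M := (mem_filter.1 (hFSsub heFS)).1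
      have hfM : f ∈ M := (mem_filter.1 (hFTsub hfFT)).1
      have hsnd : e.2 = f.2 := by rw [he2, hf2]
      have hfnotS : f.1 ∉ S := by
        intro hfS
        have hfMS : f ∈ MS := mem_filter.2 ⟨hfM, hfS⟩
        exact (hMS e (hFSsub heFS) f hfMS hef).2 hsnd
      have henotT : e.1 ∉ T := by
        intro heT
        have heMT : e ∈ MT := mem_filter.2 ⟨heM, heT⟩
        exact (hMT e heMT f (hFTsub hfFT) hef).2 hsnd
      obtain ⟨heE, heP, heS⟩ := hFS_E e heFS
      obtain ⟨hfE, hfP, hfT⟩ := hFT_E f hfFT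
      refine mem_union_right _ (mem_inter.2 ⟨?_, ?_⟩)
      · exact mem_image.2 ⟨e, mem_filter.2 ⟨heE, mem_inter.2 ⟨heP, mem_sdiff.2 ⟨heS, henotT⟩⟩⟩, he2⟩
      · exact mem_image.2 ⟨f, mem_filter.2 ⟨hfE, mem_inter.2 ⟨hfP, mem_sdiff.2 ⟨hfT, hfnotS⟩⟩⟩, hf2⟩
  -- key 2 : card of common-edge image
  have key2 : ((FS ∩ FT).image Prod.snd).card ≤ ((P ∩ S) ∩ (P ∩ T)).card := by
    calc ((FS ∩ FT).image Prod.snd).card ≤ (FS ∩ FT).card := card_image_le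
    _ = ((FS ∩ FT).image Prod.fst).card :=
        (card_image_of_injOn (injfstS.mono (Finset.coe_subset.2 inter_subset_left))).symm
    _ ≤ ((P ∩ S) ∩ (P ∩ T)).card := by
        apply card_le_card
        intro x hx
        obtain ⟨e, he, rfl⟩ := mem_image.1 hx
        rw [mem_inter] at he
        obtain ⟨_, hP1, hS1⟩ := hFS_E e he.1
        obtain ⟨_, _, hT1⟩ := hFT_E e he.2
        exact mem_inter.2 ⟨mem_inter.2 ⟨hP1, hS1⟩, mem_inter.2 ⟨hP1, hT1⟩⟩
  -- U ⊆ nbhd E P \ {v}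
  have hUsub : US ∪ UT ⊆ (nbhd E P).erase v := by
    intro b hb
    have hbN : b ∈ nbhd E P := by
      rcases mem_union.1 hb with h | h
      · obtain ⟨e, he, rfl⟩ := mem_image.1 h
        obtain ⟨heE, heP, _⟩ := hFS_E e he
        exact mem_image.2 ⟨e, mem_filter.2 ⟨heE, heP⟩, rfl⟩
      · obtain ⟨e, he, rfl⟩ := mem_image.1 h
        obtain ⟨heE, heP, _⟩ := hFT_E e he
        exact mem_image.2 ⟨e, mem_filter.2 ⟨heE, heP⟩, rfl⟩
    refine mem_erase.2 ⟨?_, hbN⟩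
    intro hbv
    have huvMS : (u, v) ∈ MS := mem_filter.2 ⟨huvM, huS⟩
    have huvMT : (u, v) ∈ MT := mem_filter.2 ⟨huvM, huT⟩
    rcases mem_union.1 hb with h | h
    · obtain ⟨e, he, he2⟩ := mem_image.1 h
      have hne : e ≠ (u, v) := by
        intro heq
        have := (hFS_E e he).2.1; rw [heq] at this; exact huP this
      exact (hMS e (hFSsub he) (u, v) huvMS hne).2 (he2.trans hbv)
    · obtain ⟨e, he, he2⟩ := mem_image.1 h
      have hne : e ≠ (u, v) := by
        intro heq
        have := (hFT_E e he).2.1; rw [heq] at this; exact huP this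
      exact (hMT e (hFTsub he) (u, v) huvMT hne).2 (he2.trans hbv)
  -- arithmetic
  have hPST : (P ∩ S) ∪ (P ∩ T) = P := by
    rw [← inter_union_distrib_left]
    exact inter_eq_left.2 hP
  have hsum : (US ∪ UT).card + (US ∩ UT).card = P.card + ((P ∩ S) ∩ (P ∩ T)).card := by
    rw [card_union_add_card_inter, cardUS, cardUT, ← card_union_add_card_inter, hPST]
  have hIle : (US ∩ UT).card ≤ ((P ∩ S) ∩ (P ∩ T)).card +
      (nbhd E (P ∩ (S \ T)) ∩ nbhd E (P ∩ (T \ S))).card :=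
    le_trans (card_le_card key1) (le_trans (card_union_le _ _) (by omega))
  have hUle : (US ∪ UT).card ≤ (nbhd E P).card - 1 := by
    calc (US ∪ UT).card ≤ ((nbhd E P).erase v).card := card_le_card hUsub
    _ = (nbhd E P).card - 1 := card_erase_of_mem hv
  have hNpos : 1 ≤ (nbhd E P).card := card_pos.2 ⟨v, hv⟩
  omega
end

section
/- Violation of Rule 2b: Let P ⊆ A be a simultaneous Hall set. Then no edge (u,v) with u ∈ S \ (T ∪ P) and v ∈ N(P) \ N(P^T) can belong to a simultaneous matching of G. -/
open Finset

variable {V W : Type*} [DecidableEq V] [DecidableEq W]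

/-- Rule 2b: if `P` is a simultaneous Hall set, no edge `(u,v)` with
`u ∈ S \ (T ∪ P)` and `v ∈ N(P) \ N(P^T)` can belong to a simultaneous matching. -/
theorem rule2b_sound (B : Finset W) (S T : Finset V) (E : Finset (V × W))
    (hE : E ⊆ (S ∪ T) ×ˢ B) (hST : (S ∩ T).Nonempty)
    (P : Finset V) (hP : P ⊆ S ∪ T)
    (hHall : (nbhd E P).card +
      (nbhd E (P ∩ (S \ T)) ∩ nbhd E (P ∩ (T \ S))).card = P.card)
    (u : V) (v : W) (huv : (u, v) ∈ E)
    (hu : u ∈ S \ (T ∪ P)) (hv : v ∈ nbhd E P \ nbhd E (P ∩ (T \ S))) :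
    ∀ M, SimMatching E M S T → (u, v) ∉ M := by
  rintro M ⟨hME, hMS, hCS, hMT, hCT⟩ huvM
  classical
  set MP := M.filter (fun e => e.1 ∈ P) with hMPdef
  set D := nbhd E (P ∩ (S \ T)) ∩ nbhd E (P ∩ (T \ S)) with hDdef
  -- key uniqueness lemma from the matching conditions
  have key : ∀ (X : Finset V), IsMatching (M.filter (fun e => e.1 ∈ X)) →
      ∀ e ∈ M, ∀ f ∈ M, e.1 ∈ X → f.1 ∈ X → (e.1 = f.1 ∨ e.2 = f.2) → e = f := by
    intro X hX e he f hf heX hfX h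
    by_contra hne
    have := hX e (mem_filter.2 ⟨he, heX⟩) f (mem_filter.2 ⟨hf, hfX⟩) hne
    rcases h with h | h
    · exact this.1 h
    · exact this.2 h
  have hMPsub : ∀ e ∈ MP, e ∈ M ∧ e.1 ∈ P := fun e he => mem_filter.1 he
  -- each e ∈ MP has e.1 ∈ S ∪ T
  have hPST : ∀ e ∈ MP, e.1 ∈ S ∪ T := fun e he => hP (hMPsub e he).2
  have uniq : ∀ e ∈ MP, ∀ f ∈ MP, e.1 = f.1 → e = f := by
    intro e he f hf h
    rcases mem_union.1 (hPST e he) with hS | hT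
    · exact key S hMS e (hMPsub e he).1 f (hMPsub f hf).1 hS (h ▸ hS) (Or.inl h)
    · exact key T hMT e (hMPsub e he).1 f (hMPsub f hf).1 hT (h ▸ hT) (Or.inl h)
  have hMPcard : MP.card = P.card := by
    apply Finset.card_bij (fun e _ => e.1)
    · intro e he; exact (hMPsub e he).2
    · intro e he f hf h; exact uniq e he f hf h
    · intro p hp
      rcases mem_union.1 (hP hp) with hS | hT
      · obtain ⟨e, he, hep⟩ := hCS p hS
        exact ⟨e, mem_filter.2 ⟨(mem_filter.1 he).1, hep ▸ hp⟩, hep⟩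
      · obtain ⟨e, he, hep⟩ := hCT p hT
        exact ⟨e, mem_filter.2 ⟨(mem_filter.1 he).1, hep ▸ hp⟩, hep⟩
  set U := MP.image Prod.snd with hUdef
  have hUsub : U ⊆ nbhd E P := by
    intro b hb
    obtain ⟨e, he, heb⟩ := mem_image.1 hb
    exact mem_image.2 ⟨e, mem_filter.2 ⟨hME (hMPsub e he).1, (hMPsub e he).2⟩, heb⟩
  -- fiber bounds
  have fiber2 : ∀ b, (MP.filter (fun e => e.2 = b)).card ≤ 2 := by
    intro b
    have hsplit : MP.filter (fun e => e.2 = b) ⊆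
        (MP.filter (fun e => e.2 = b ∧ e.1 ∈ S)) ∪ (MP.filter (fun e => e.2 = b ∧ e.1 ∉ S)) := by
      intro e he
      rcases mem_filter.1 he with ⟨h1, h2⟩
      by_cases hS : e.1 ∈ S
      · exact mem_union_left _ (mem_filter.2 ⟨h1, h2, hS⟩)
      · exact mem_union_right _ (mem_filter.2 ⟨h1, h2, hS⟩)
    have h1 : (MP.filter (fun e => e.2 = b ∧ e.1 ∈ S)).card ≤ 1 := by
      apply card_le_one.2
      intro e he f hf
      rcases mem_filter.1 he with ⟨he', hb1, hS1⟩
      rcases mem_filter.1 hf with ⟨hf', hb2, hS2⟩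
      exact key S hMS e (hMPsub e he').1 f (hMPsub f hf').1 hS1 hS2 (Or.inr (hb1.trans hb2.symm))
    have h2 : (MP.filter (fun e => e.2 = b ∧ e.1 ∉ S)).card ≤ 1 := by
      apply card_le_one.2
      intro e he f hf
      rcases mem_filter.1 he with ⟨he', hb1, hS1⟩
      rcases mem_filter.1 hf with ⟨hf', hb2, hS2⟩
      have hT1 : e.1 ∈ T := (mem_union.1 (hPST e he')).resolve_left hS1
      have hT2 : f.1 ∈ T := (mem_union.1 (hPST f hf')).resolve_left hS2
      exact key T hMT e (hMPsub e he').1 f (hMPsub f hf').1 hT1 hT2 (Or.inr (hb1.trans hb2.symm))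
    calc (MP.filter (fun e => e.2 = b)).card ≤ _ := card_le_card hsplit
      _ ≤ _ := card_union_le _ _
      _ ≤ 2 := by omega
  have fiber1 : ∀ b, b ∉ D → (MP.filter (fun e => e.2 = b)).card ≤ 1 := by
    intro b hbD
    apply card_le_one.2
    intro e he f hf
    rcases mem_filter.1 he with ⟨he', hb1⟩
    rcases mem_filter.1 hf with ⟨hf', hb2⟩
    by_cases hS1 : e.1 ∈ S
    · by_cases hS2 : f.1 ∈ S
      · exact key S hMS e (hMPsub e he').1 f (hMPsub f hf').1 hS1 hS2 (Or.inr (hb1.trans hb2.symm))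
      · -- e.1 ∈ S, f.1 ∈ T \ S; if e.1 ∈ T too, contradiction via T matching; else b ∈ D
        have hT2 : f.1 ∈ T := (mem_union.1 (hPST f hf')).resolve_left hS2
        by_cases hT1 : e.1 ∈ T
        · exact key T hMT e (hMPsub e he').1 f (hMPsub f hf').1 hT1 hT2 (Or.inr (hb1.trans hb2.symm))
        · exfalso; apply hbD
          refine mem_inter.2 ⟨?_, ?_⟩
          · exact mem_image.2 ⟨e, mem_filter.2 ⟨hME (hMPsub e he').1,
              mem_inter.2 ⟨(hMPsub e he').2, mem_sdiff.2 ⟨hS1, hT1⟩⟩⟩, hb1⟩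
          · exact mem_image.2 ⟨f, mem_filter.2 ⟨hME (hMPsub f hf').1,
              mem_inter.2 ⟨(hMPsub f hf').2, mem_sdiff.2 ⟨hT2, hS2⟩⟩⟩, hb2⟩
    · have hT1 : e.1 ∈ T := (mem_union.1 (hPST e he')).resolve_left hS1
      by_cases hT2 : f.1 ∈ T
      · exact key T hMT e (hMPsub e he').1 f (hMPsub f hf').1 hT1 hT2 (Or.inr (hb1.trans hb2.symm))
      · have hS2 : f.1 ∈ S := (mem_union.1 (hPST f hf')).resolve_right hT2
        exfalso; apply hbD
        refine mem_inter.2 ⟨?_, ?_⟩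
        · exact mem_image.2 ⟨f, mem_filter.2 ⟨hME (hMPsub f hf').1,
            mem_inter.2 ⟨(hMPsub f hf').2, mem_sdiff.2 ⟨hS2, hT2⟩⟩⟩, hb2⟩
        · exact mem_image.2 ⟨e, mem_filter.2 ⟨hME (hMPsub e he').1,
            mem_inter.2 ⟨(hMPsub e he').2, mem_sdiff.2 ⟨hT1, hS1⟩⟩⟩, hb1⟩
  -- counting
  have hsum : MP.card = ∑ b ∈ U, (MP.filter (fun e => e.2 = b)).card :=
    card_eq_sum_card_fiberwise (fun e he => mem_image.2 ⟨e, he, rfl⟩)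
  have hbound : MP.card ≤ U.card + (U ∩ D).card := by
    rw [hsum]
    calc ∑ b ∈ U, (MP.filter (fun e => e.2 = b)).card
        ≤ ∑ b ∈ U, (1 + if b ∈ D then 1 else 0) := by
          apply Finset.sum_le_sum
          intro b _
          by_cases hb : b ∈ D
          · simp only [hb, if_true]; exact fiber2 b
          · simp only [hb, if_false]; simpa using fiber1 b hb
      _ = U.card + (U ∩ D).card := by
          rw [Finset.sum_add_distrib]
          congr 1
          · simp
          · rw [← filter_mem_eq_inter, card_filter]
  have hUeq : U = nbhd E P := by
    have h1 : (U ∩ D).card ≤ D.card := card_le_card inter_subset_right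
    have h2 : (nbhd E P).card ≤ U.card := by omega
    exact eq_of_subset_of_card_le hUsub h2
  have hvU : v ∈ U := hUeq ▸ (mem_sdiff.1 hv).1
  obtain ⟨e, he, hev⟩ := mem_image.1 hvU
  rcases mem_sdiff.1 hu with ⟨huS, huTP⟩
  have huP : u ∉ P := fun h => huTP (mem_union_right _ h)
  have heS : e.1 ∉ S := by
    intro heS
    have heq := key S hMS e (hMPsub e he).1 (u, v) huvM heS huS (Or.inr hev)
    have := (hMPsub e he).2
    rw [heq] at this
    exact huP this
  have heT : e.1 ∈ T := (mem_union.1 (hPST e he)).resolve_left heS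
  exact (mem_sdiff.1 hv).2 (mem_image.2 ⟨e, mem_filter.2 ⟨hME (hMPsub e he).1,
    mem_inter.2 ⟨(hMPsub e he).2, mem_sdiff.2 ⟨heT, heS⟩⟩⟩, hev⟩)
end

section
/- Pathological instance is unsatisfiable: For n ≥ 1, let X₁,…,Xₙ, Y₁,…,Y₂ₙ, Z₁,…,Zₙ be integer variables with domains D(Xᵢ) = [1, 2n−1], D(Yᵢ) = [1, 4n−1], D(Zᵢ) = [2n, 4n−1]. Then there is no assignment making all of X ∪ Y pairwise distinct and all of Y ∪ Z pairwise distinct simultaneously. -/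
/-- The pathological instance `Iₙ` is unsatisfiable: there is no assignment with
`X` in `[1,2n-1]`, `Y` in `[1,4n-1]`, `Z` in `[2n,4n-1]` making both `X ∪ Y` and
`Y ∪ Z` sets of pairwise distinct values. -/
theorem pathological_unsat (n : ℕ) (hn : 1 ≤ n) :
    ¬ ∃ (x : Fin n → ℤ) (y : Fin (2 * n) → ℤ) (z : Fin n → ℤ),
      (∀ i, x i ∈ Finset.Icc (1 : ℤ) (2 * n - 1)) ∧
      (∀ i, y i ∈ Finset.Icc (1 : ℤ) (4 * n - 1)) ∧
      (∀ i, z i ∈ Finset.Icc ((2 * n : ℕ) : ℤ) (4 * n - 1)) ∧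
      Function.Injective (Sum.elim x y) ∧
      Function.Injective (Sum.elim y z) := by
  rintro ⟨x, y, z, hx, hy, hz, hxy, hyz⟩
  have hxinj : Function.Injective x := fun a b h => by
    have := hxy (a₁ := Sum.inl a) (a₂ := Sum.inl b) (by simpa using h)
    simpa using this
  have hyinj : Function.Injective y := fun a b h => by
    have := hxy (a₁ := Sum.inr a) (a₂ := Sum.inr b) (by simpa using h)
    simpa using this
  have hzinj : Function.Injective z := fun a b h => by
    have := hyz (a₁ := Sum.inr a) (a₂ := Sum.inr b) (by simpa using h)
    simpa using this
  set A : Finset ℤ := Finset.Icc (1 : ℤ) (2 * n - 1) with hA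
  set B : Finset ℤ := Finset.Icc ((2 * n : ℕ) : ℤ) (4 * n - 1) with hB
  set Sx : Finset ℤ := Finset.image x Finset.univ with hSx
  set Sy : Finset ℤ := Finset.image y Finset.univ with hSy
  set Sz : Finset ℤ := Finset.image z Finset.univ with hSz
  have cx : Sx.card = n := by
    rw [hSx, Finset.card_image_of_injective _ hxinj]; simp
  have cy : Sy.card = 2 * n := by
    rw [hSy, Finset.card_image_of_injective _ hyinj]; simp
  have cz : Sz.card = n := by
    rw [hSz, Finset.card_image_of_injective _ hzinj]; simp
  -- Sy ∩ A ⊆ A \ Sx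
  have h1 : Sy ∩ A ⊆ A \ Sx := by
    intro v hv
    simp only [Finset.mem_inter, Finset.mem_sdiff] at hv ⊢
    refine ⟨hv.2, ?_⟩
    intro hvx
    obtain ⟨i, _, hi⟩ := Finset.mem_image.mp hvx
    obtain ⟨j, _, hj⟩ := Finset.mem_image.mp hv.1
    have : Sum.elim x y (Sum.inl i) = Sum.elim x y (Sum.inr j) := by simp [hi, hj]
    exact absurd (hxy this) (by simp)
  have h2 : Sy ∩ B ⊆ B \ Sz := by
    intro v hv
    simp only [Finset.mem_inter, Finset.mem_sdiff] at hv ⊢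
    refine ⟨hv.2, ?_⟩
    intro hvz
    obtain ⟨i, _, hi⟩ := Finset.mem_image.mp hvz
    obtain ⟨j, _, hj⟩ := Finset.mem_image.mp hv.1
    have : Sum.elim y z (Sum.inl j) = Sum.elim y z (Sum.inr i) := by simp [hi, hj]
    exact absurd (hyz this) (by simp)
  have hSxA : Sx ⊆ A := by
    intro v hv; obtain ⟨i, _, hi⟩ := Finset.mem_image.mp hv; exact hi ▸ hx i
  have hSzB : Sz ⊆ B := by
    intro v hv; obtain ⟨i, _, hi⟩ := Finset.mem_image.mp hv; exact hi ▸ hz i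
  have cA : A.card = 2 * n - 1 := by
    rw [hA]
    rw [Int.card_Icc]
    have : (1:ℤ) ≤ 2 * n := by exact_mod_cast Nat.one_le_iff_ne_zero.mpr (by omega)
    omega
  have cB : B.card = 2 * n := by
    rw [hB, Int.card_Icc]
    omega
  have c1 : (Sy ∩ A).card ≤ n - 1 := by
    calc (Sy ∩ A).card ≤ (A \ Sx).card := Finset.card_le_card h1
      _ = A.card - Sx.card := Finset.card_sdiff_of_subset hSxA
      _ = n - 1 := by omega
  have c2 : (Sy ∩ B).card ≤ n := by
    calc (Sy ∩ B).card ≤ (B \ Sz).card := Finset.card_le_card h2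
      _ = B.card - Sz.card := Finset.card_sdiff_of_subset hSzB
      _ = n := by omega
  have hcover : Sy ⊆ (Sy ∩ A) ∪ (Sy ∩ B) := by
    intro v hv
    obtain ⟨j, _, hj⟩ := Finset.mem_image.mp hv
    have hvIcc := hj ▸ hy j
    simp only [Finset.mem_Icc] at hvIcc
    simp only [Finset.mem_union, Finset.mem_inter, hA, hB, Finset.mem_Icc]
    by_cases hc : v ≤ 2 * (n:ℤ) - 1
    · exact Or.inl ⟨hv, hvIcc.1, hc⟩
    · exact Or.inr ⟨hv, by push_cast; omega, hvIcc.2⟩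
  have := (Finset.card_le_card hcover).trans (Finset.card_union_le _ _)
  omega
end
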